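/- For symmetric positive definite matrices P and Q with t ∈ [0,1], the determinant of the point on the Affine-Invariant geodesic γ(t) = P^{1/2} exp(t log(P^{−1/2} Q P^{−1/2})) P^{1/2} equals det(P)^{1−t} · det(Q)^t, and hence coincides with the determinant of the corresponding point on the Log-Euclidean geodesic. -/

import Mathlib

open Matrix
open scoped Classical

open scoped MatrixOrder in
/-- The symmetric positive definite square root of a positive definite matrix
(junk value `1` otherwise). -/
noncomputable def msqrt {n : ℕ} (P : Matrix (Fin n) (Fin n) ℝ) : Matrix (Fin n) (Fin n) ℝ :=
  if h : P.PosDef then CFC.sqrt P else 1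

open scoped MatrixOrder

/-- The determinant of the exponential of a real symmetric matrix is the exponential
of its trace. -/
lemma det_exp_symm {n : ℕ} (S : Matrix (Fin n) (Fin n) ℝ) (hS : S.IsSymm) :
    (NormedSpace.exp S).det = Real.exp S.trace := by
  have hH : S.IsHermitian := by
    rw [Matrix.IsHermitian]
    exact (Matrix.conjTranspose_eq_transpose_of_trivial S).trans hS
  set U : Matrix (Fin n) (Fin n) ℝ := (hH.eigenvectorUnitary : Matrix (Fin n) (Fin n) ℝ) with hUdef
  have hsU : star U * U = 1 := hH.eigenvectorUnitary.2.1
  have hUs : U * star U = 1 := hH.eigenvectorUnitary.2.2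
  have hUinv : U⁻¹ = star U := Matrix.inv_eq_left_inv hsU
  have hUunit : IsUnit U :=
    (Matrix.isUnit_iff_isUnit_det U).2 (Matrix.isUnit_det_of_left_inverse hsU)
  set D : Matrix (Fin n) (Fin n) ℝ := Matrix.diagonal (RCLike.ofReal ∘ hH.eigenvalues) with hDdef
  have hspec : S = U * D * star U := by simpa [Unitary.conjStarAlgAut_apply, hUdef, hDdef] using hH.spectral_theorem
  have hdiag : NormedSpace.exp D = Matrix.diagonal (fun i => Real.exp (hH.eigenvalues i)) := by
    rw [hDdef, Matrix.exp_diagonal]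
    funext i j
    simp [Pi.exp_def, ← Real.exp_eq_exp_ℝ]
  have hexpS : NormedSpace.exp S = U * NormedSpace.exp D * star U := by
    rw [hspec, ← hUinv]
    exact Matrix.exp_conj U D hUunit
  have htr : S.trace = ∑ i, hH.eigenvalues i := by
    conv_lhs => rw [hspec]
    rw [Matrix.trace_mul_comm, ← mul_assoc, hsU, one_mul]
    simp [hDdef, Matrix.trace_diagonal]
  rw [hexpS, hdiag, Matrix.det_mul_right_comm, hUs, one_mul,
    Matrix.det_diagonal, htr, Real.exp_sum]

/-- Conjugating a positive definite matrix by the inverse of a positive definite matrix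
yields a positive definite matrix. -/
lemma posDef_conj_inv {n : ℕ} {Q B : Matrix (Fin n) (Fin n) ℝ} (hQ : Q.PosDef)
    (hB : B.PosDef) : (B⁻¹ * Q * B⁻¹).PosDef := by
  set C := B⁻¹ with hC
  have hCpd : C.PosDef := hB.inv
  have hCH : C.IsHermitian := hCpd.isHermitian
  have hCunit : IsUnit C.det := hCpd.isUnit.map detMonoidHom
  refine Matrix.PosDef.of_dotProduct_mulVec_pos ?_ (fun x hx => ?_)
  · show (C * Q * C)ᴴ = C * Q * C
    rw [Matrix.conjTranspose_mul, Matrix.conjTranspose_mul, hCH.eq, hQ.isHermitian.eq]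
    rw [Matrix.mul_assoc]
  · have hy : C *ᵥ x ≠ 0 := by
      intro h
      apply hx
      have := congrArg (fun v => C⁻¹ *ᵥ v) h
      simpa [Matrix.mulVec_mulVec, Matrix.nonsing_inv_mul C hCunit] using this
    have key : dotProduct (star x) ((C * Q * C) *ᵥ x)
        = dotProduct (star (C *ᵥ x)) (Q *ᵥ (C *ᵥ x)) := by
      rw [← Matrix.mulVec_mulVec, ← Matrix.mulVec_mulVec, Matrix.dotProduct_mulVec,
        Matrix.star_mulVec, hCH.eq]
    rw [key]
    exact hQ.dotProduct_mulVec_pos hy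

/-- The positive semidefinite square root of a positive definite matrix is positive definite. -/
lemma msqrt_posDef {n : ℕ} {P : Matrix (Fin n) (Fin n) ℝ} (hP : P.PosDef) :
    (CFC.sqrt P).PosDef := by
  set B := CFC.sqrt P with hB
  have hBpsd : B.PosSemidef := (CFC.sqrt_nonneg P).posSemidef
  have hBB : B * B = P := CFC.sqrt_mul_sqrt_self P hP.posSemidef.nonneg
  refine Matrix.PosDef.of_dotProduct_mulVec_pos hBpsd.1 (fun x hx => ?_)
  rcases lt_or_eq_of_le (hBpsd.dotProduct_mulVec_nonneg x) with h | h
  · exact h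
  · exfalso
    have hBx : B *ᵥ x = 0 := (hBpsd.dotProduct_mulVec_zero_iff x).mp h.symm
    have hPx : P *ᵥ x = 0 := by rw [← hBB, ← Matrix.mulVec_mulVec, hBx, Matrix.mulVec_zero]
    have := hP.dotProduct_mulVec_pos hx
    rw [hPx, dotProduct_zero] at this
    exact lt_irrefl 0 this

/-- Along the Affine-Invariant geodesic
γ(t) = P^{1/2} exp(t log(P^{−1/2} Q P^{−1/2})) P^{1/2},
det γ(t) = (det P)^{1−t} (det Q)^t, which coincides with the determinant of the
corresponding point exp((1−t) log P + t log Q) on the Log-Euclidean geodesic. -/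
theorem affineInvariant_geodesic_det (n : ℕ)
    (mlog : Matrix (Fin n) (Fin n) ℝ → Matrix (Fin n) (Fin n) ℝ)
    (hexp_log : ∀ P : Matrix (Fin n) (Fin n) ℝ, P.PosDef → NormedSpace.exp (mlog P) = P)
    (hlog_exp : ∀ S : Matrix (Fin n) (Fin n) ℝ, S.IsSymm → mlog (NormedSpace.exp S) = S)
    (hlog_symm : ∀ P : Matrix (Fin n) (Fin n) ℝ, P.PosDef → (mlog P).IsSymm)
    (P Q : Matrix (Fin n) (Fin n) ℝ) (hP : P.PosDef) (hQ : Q.PosDef)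
    (t : ℝ) (ht : t ∈ Set.Icc (0 : ℝ) 1) :
    (msqrt P * NormedSpace.exp (t • mlog ((msqrt P)⁻¹ * Q * (msqrt P)⁻¹)) * msqrt P).det
      = P.det ^ (1 - t) * Q.det ^ t ∧
    (msqrt P * NormedSpace.exp (t • mlog ((msqrt P)⁻¹ * Q * (msqrt P)⁻¹)) * msqrt P).det
      = (NormedSpace.exp ((1 - t) • mlog P + t • mlog Q)).det := by
  have hdP : (0:ℝ) < P.det := hP.det_pos
  have hdQ : (0:ℝ) < Q.det := hQ.det_pos
  have hBdef : msqrt P = CFC.sqrt P := dif_pos hP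
  set B := msqrt P with hB
  have hBpd : B.PosDef := hBdef ▸ msqrt_posDef hP
  have hBB : B * B = P := by rw [hBdef]; exact CFC.sqrt_mul_sqrt_self P hP.posSemidef.nonneg
  have hdB : B.det * B.det = P.det := by rw [← Matrix.det_mul, hBB]
  have hdBpos : (0:ℝ) < B.det := hBpd.det_pos
  set A := B⁻¹ * Q * B⁻¹ with hA
  have hApd : A.PosDef := posDef_conj_inv hQ hBpd
  have hdAinv : B⁻¹.det = (B.det)⁻¹ := by
    rw [Matrix.det_nonsing_inv, Ring.inverse_eq_inv]
  have hdA : A.det = Q.det / P.det := by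
    rw [hA, Matrix.det_mul, Matrix.det_mul, hdAinv]
    field_simp [← hdB]
    rw [← hdB]; ring
  set S := mlog A with hS
  have hSsym : S.IsSymm := hlog_symm A hApd
  have hexpS : NormedSpace.exp S = A := hexp_log A hApd
  have htrS : Real.exp S.trace = A.det := by rw [← det_exp_symm S hSsym, hexpS]
  have htS : (t • S).IsSymm := by
    rw [Matrix.IsSymm, Matrix.transpose_smul, hSsym.eq]
  have hmain : (B * NormedSpace.exp (t • S) * B).det = P.det * A.det ^ t := by
    have hpow : A.det ^ t = Real.exp (t * S.trace) := by
      rw [← htrS, Real.rpow_def_of_pos (Real.exp_pos _), Real.log_exp, mul_comm]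
    rw [Matrix.det_mul, Matrix.det_mul, det_exp_symm _ htS, Matrix.trace_smul, hpow,
      smul_eq_mul, ← hdB]
    ring
  constructor
  · rw [hmain, hdA, Real.div_rpow hdQ.le hdP.le, Real.rpow_sub hdP, Real.rpow_one]
    field_simp
  · have hsum : ((1 - t) • mlog P + t • mlog Q).IsSymm := by
      rw [Matrix.IsSymm, Matrix.transpose_add, Matrix.transpose_smul, Matrix.transpose_smul,
        (hlog_symm P hP).eq, (hlog_symm Q hQ).eq]
    have htrP : Real.exp (mlog P).trace = P.det := by
      rw [← det_exp_symm _ (hlog_symm P hP), hexp_log P hP]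
    have htrQ : Real.exp (mlog Q).trace = Q.det := by
      rw [← det_exp_symm _ (hlog_symm Q hQ), hexp_log Q hQ]
    rw [hmain, det_exp_symm _ hsum, Matrix.trace_add, Matrix.trace_smul, Matrix.trace_smul,
      Real.exp_add, smul_eq_mul, smul_eq_mul]
    have h1 : Real.exp ((1 - t) * (mlog P).trace) = P.det ^ (1 - t) := by
      rw [← htrP, Real.rpow_def_of_pos (Real.exp_pos _), Real.log_exp, mul_comm]
    have h2 : Real.exp (t * (mlog Q).trace) = Q.det ^ t := by
      rw [← htrQ, Real.rpow_def_of_pos (Real.exp_pos _), Real.log_exp, mul_comm]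
    rw [h1, h2, hdA, Real.div_rpow hdQ.le hdP.le, Real.rpow_sub hdP, Real.rpow_one]
    field_simp
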